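/- For a commutative local pro-$p$ ring $A$ ($p$ odd) and a closed ideal $\mathfrak{a}$ of $A$, the principal congruence subgroup $\Gamma_A(\mathfrak{a}) = \ker(\mathrm{SL}_2(A) \to \mathrm{SL}_2(A/\mathfrak{a}))$ is a pro-$p$ group, and the first Pink-Lie algebra $L_1(\Gamma_A(\mathfrak{a}))$ — the closed additive subgroup of trace-zero matrices generated by $\Theta(x) = x - \tfrac{\operatorname{tr}(x)}{2}$ for $x \in \Gamma_A(\mathfrak{a})$ — equals $\mathfrak{sl}_2(\mathfrak{a})$, the set of trace-zero $2\times 2$ matrices with all entries in $\mathfrak{a}$. -/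

import Mathlib

/-- A (commutative, local) topological ring is pro-`p` if it is profinite as a topological
space and all its finite discrete quotients have `p`-power order. -/
def IsProPRing (p : ℕ) (A : Type*) [CommRing A] [TopologicalSpace A] : Prop :=
  CompactSpace A ∧ TotallyDisconnectedSpace A ∧ T2Space A ∧
    ∀ I : Ideal A, IsOpen (I : Set A) → ∃ k : ℕ, Nat.card (A ⧸ I) = p ^ k

/-- Pink's map `Θ(x) = x - (tr x / 2) · 1`. -/
noncomputable def Theta {A : Type*} [CommRing A] [Invertible (2 : A)]
    (x : Matrix (Fin 2) (Fin 2) A) : Matrix (Fin 2) (Fin 2) A :=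
  x - (⅟(2 : A) * x.trace) • (1 : Matrix (Fin 2) (Fin 2) A)

/-- The principal congruence subgroup `Γ_A(a) = ker (SL₂(A) → SL₂(A/a))`. -/
def CongrSubgroup {A : Type*} [CommRing A] (a : Ideal A) :
    Subgroup (Matrix.SpecialLinearGroup (Fin 2) A) :=
  MonoidHom.ker (Matrix.SpecialLinearGroup.map (n := Fin 2) (Ideal.Quotient.mk a))

section Aux

variable {A : Type*} [CommRing A]

lemma mem_congr_iff (a : Ideal A) (x : Matrix.SpecialLinearGroup (Fin 2) A) :
    x ∈ CongrSubgroup a ↔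
      ∀ i j, (x : Matrix (Fin 2) (Fin 2) A) i j - (1 : Matrix (Fin 2) (Fin 2) A) i j ∈ a := by
  have h1 : ((1 : Matrix.SpecialLinearGroup (Fin 2) (A ⧸ a)) : Matrix (Fin 2) (Fin 2) (A ⧸ a))
      = ((1 : Matrix (Fin 2) (Fin 2) A)).map (Ideal.Quotient.mk a) := by
    rw [Matrix.SpecialLinearGroup.coe_one, Matrix.map_one _ (map_zero _) (map_one _)]
  rw [CongrSubgroup, MonoidHom.mem_ker, Matrix.SpecialLinearGroup.ext_iff]
  simp only [Matrix.SpecialLinearGroup.map_apply_coe, RingHom.mapMatrix_apply, h1]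
  simp [Matrix.map_apply, Ideal.Quotient.mk_eq_mk_iff_sub_mem]

lemma entry_pow_mem (b : Ideal A) {n : Matrix (Fin 2) (Fin 2) A} {j : ℕ}
    (hn : ∀ k l, n k l ∈ b ^ j) :
    ∀ i : ℕ, ∀ k l, (n ^ (i + 1)) k l ∈ b ^ ((i + 1) * j) := by
  intro i
  induction i with
  | zero => simpa using hn
  | succ i ih =>
    intro k l
    have h : n ^ (i + 2) = n ^ (i + 1) * n := by rw [pow_succ]
    have h2 : (i + 2) * j = (i + 1) * j + j := by ring
    rw [h, h2, Matrix.mul_apply, pow_add]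
    exact Ideal.sum_mem _ fun c _ => Ideal.mul_mem_mul (ih k c) (hn c l)

lemma step_lemma {p : ℕ} (b : Ideal A) (hpb : (p : A) ∈ b)
    {n : Matrix (Fin 2) (Fin 2) A} {j : ℕ} (hj : 1 ≤ j) (hn : ∀ k l, n k l ∈ b ^ j) :
    ∀ k l, ((1 + n) ^ p - 1) k l ∈ b ^ (j + 1) := by
  intro k l
  have hexp : (1 + n) ^ p
      = ∑ m ∈ Finset.range (p + 1), (p.choose m) • n ^ m := by
    rw [add_comm, (Commute.one_right n).add_pow]
    refine Finset.sum_congr rfl fun m _ => ?_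
    rw [one_pow, mul_one, nsmul_eq_mul']
  have hsum : (1 + n) ^ p - 1
      = ∑ m ∈ Finset.range p, (p.choose (m + 1)) • n ^ (m + 1) := by
    rw [hexp, Finset.sum_range_succ']
    simp
  rw [hsum, Matrix.sum_apply]
  refine Ideal.sum_mem _ fun m _ => ?_
  rcases Nat.eq_zero_or_pos m with rfl | hm
  · rw [Matrix.smul_apply, Nat.choose_one_right, pow_one, nsmul_eq_mul, pow_succ']
    exact Ideal.mul_mem_mul hpb (hn k l)
  · rw [Matrix.smul_apply]
    exact Submodule.smul_of_tower_mem _ _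
      (Ideal.pow_le_pow_right (by nlinarith) (entry_pow_mem b hn m k l))

end Aux

section Aux2

variable {A : Type*} [CommRing A]

lemma key_pow {p : ℕ} (b : Ideal A) (hpb : (p : A) ∈ b)
    {y : Matrix (Fin 2) (Fin 2) A} (hy : ∀ k l, (y - 1) k l ∈ b) :
    ∀ r : ℕ, ∀ k l, (y ^ p ^ r - 1) k l ∈ b ^ (r + 1) := by
  intro r
  induction r with
  | zero => simpa using hy
  | succ r ih =>
    intro k l
    have h1 : (1 : Matrix (Fin 2) (Fin 2) A) + (y ^ p ^ r - 1) = y ^ p ^ r := by abel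
    have h2 : y ^ p ^ (r + 1) = ((1 : Matrix (Fin 2) (Fin 2) A) + (y ^ p ^ r - 1)) ^ p := by
      rw [h1, ← pow_mul, pow_succ]
    rw [h2]
    exact step_lemma b hpb (Nat.succ_le_succ (Nat.zero_le r)) ih k l

/-- `sl₂(a)` as an additive subgroup of matrices. -/
def sl2 (a : Ideal A) : AddSubgroup (Matrix (Fin 2) (Fin 2) A) where
  carrier := {m : Matrix (Fin 2) (Fin 2) A | m.trace = 0 ∧ ∀ i j, m i j ∈ a}
  add_mem' := by
    rintro x y ⟨hx1, hx2⟩ ⟨hy1, hy2⟩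
    exact ⟨by rw [Matrix.trace_add, hx1, hy1, add_zero],
      fun i j => by rw [Matrix.add_apply]; exact add_mem (hx2 i j) (hy2 i j)⟩
  zero_mem' := ⟨by simp, fun i j => by simp⟩
  neg_mem' := by
    rintro x ⟨h1, h2⟩
    exact ⟨by rw [Matrix.trace_neg, h1, neg_zero],
      fun i j => by rw [Matrix.neg_apply]; exact neg_mem (h2 i j)⟩

variable [Invertible (2 : A)]

lemma theta_eq (x : Matrix (Fin 2) (Fin 2) A) :
    Theta x = (x - 1) - (⅟(2 : A) * (x - 1).trace) • (1 : Matrix (Fin 2) (Fin 2) A) := by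
  rw [Theta, Matrix.trace_sub, Matrix.trace_one]
  simp only [Fintype.card_fin, Nat.cast_ofNat]
  rw [mul_sub, invOf_mul_self, sub_smul, one_smul]
  abel

lemma theta_eq_of_trace (x : Matrix (Fin 2) (Fin 2) A) (h : x.trace = 2) :
    Theta x = x - 1 := by
  rw [Theta, h, invOf_mul_self, one_smul]

lemma theta_mem_sl2 (a : Ideal A) (x : Matrix.SpecialLinearGroup (Fin 2) A)
    (hx : x ∈ CongrSubgroup a) :
    Theta (x : Matrix (Fin 2) (Fin 2) A) ∈ sl2 a := by
  rw [mem_congr_iff] at hx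
  constructor
  · rw [Theta, Matrix.trace_sub, Matrix.trace_smul, Matrix.trace_one]
    simp only [Fintype.card_fin, Nat.cast_ofNat, smul_eq_mul]
    rw [mul_comm (⅟(2:A)) _, mul_assoc, invOf_mul_self, mul_one, sub_self]
  · intro i j
    rw [theta_eq, Matrix.sub_apply, Matrix.smul_apply, smul_eq_mul,
      Matrix.trace_fin_two]
    refine sub_mem ?_ (Ideal.mul_mem_right _ _ (Ideal.mul_mem_left _ _ ?_))
    · exact hx i j
    · have h0 := hx 0 0
      have h1 := hx 1 1
      rw [Matrix.one_apply_eq] at h0 h1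
      simpa [Matrix.sub_apply, Matrix.one_apply_eq] using add_mem h0 h1

end Aux2

section Aux3

variable {A : Type*} [CommRing A]

/-- Auxiliary explicit element of `SL₂`. -/
def elt (s b c d : A) (h : (1 + s) * (1 + d) - b * c = 1) :
    Matrix.SpecialLinearGroup (Fin 2) A :=
  ⟨!![1 + s, b; c, 1 + d], by rw [Matrix.det_fin_two_of]; exact h⟩

lemma elt_mem (a : Ideal A) (s b c d : A) (h : (1 + s) * (1 + d) - b * c = 1)
    (hs : s ∈ a) (hb : b ∈ a) (hc : c ∈ a) (hd : d ∈ a) :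
    elt s b c d h ∈ CongrSubgroup a := by
  rw [mem_congr_iff]
  intro i j
  fin_cases i <;> fin_cases j <;>
    simp [elt, Matrix.one_apply] <;> assumption

lemma theta_elt (s b c d : A) [Invertible (2 : A)] (h : (1 + s) * (1 + d) - b * c = 1)
    (hsd : d = -s) :
    Theta ((elt s b c d h : Matrix.SpecialLinearGroup (Fin 2) A) :
      Matrix (Fin 2) (Fin 2) A) = !![s, b; c, d] := by
  have htr : ((elt s b c d h : Matrix.SpecialLinearGroup (Fin 2) A) :
      Matrix (Fin 2) (Fin 2) A).trace = 2 := by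
    show Matrix.trace !![1 + s, b; c, 1 + d] = 2
    rw [Matrix.trace_fin_two_of, hsd]; ring
  rw [theta_eq_of_trace _ htr]
  show !![1 + s, b; c, 1 + d] - 1 = _
  rw [Matrix.one_fin_two]
  ext i j
  fin_cases i <;> fin_cases j <;> simp

end Aux3

/-- For a commutative local pro-`p` ring `A` (`p` odd) and a closed ideal
`a ⊆ m`, the principal congruence subgroup `Γ_A(a)` is a pro-`p` group (all its finite
continuous quotients, i.e. its images in `SL₂(A/I)` for open ideals `I`, are `p`-groups),
and the first Pink-Lie algebra — the closed additive subgroup generated by `Θ(Γ_A(a))` —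
equals `sl₂(a)`, the set of trace-zero matrices with all entries in `a`. -/
theorem stmt_4 {p : ℕ} (hp : p.Prime) (hodd : p ≠ 2)
    {A : Type*} [CommRing A] [TopologicalSpace A] [IsTopologicalRing A] [IsLocalRing A]
    [Invertible (2 : A)] (hA : IsProPRing p A)
    (a : Ideal A) (hclosed : IsClosed (a : Set A))
    (ham : a ≤ IsLocalRing.maximalIdeal A) :
    (∀ I : Ideal A, IsOpen (I : Set A) →
      IsPGroup p
        ↥(Subgroup.map (Matrix.SpecialLinearGroup.map (n := Fin 2) (Ideal.Quotient.mk I))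
          (CongrSubgroup a))) ∧
    ((AddSubgroup.topologicalClosure
        (AddSubgroup.closure
          ((fun x : Matrix.SpecialLinearGroup (Fin 2) A =>
              Theta (x : Matrix (Fin 2) (Fin 2) A)) ''
            (CongrSubgroup a : Set (Matrix.SpecialLinearGroup (Fin 2) A)))))
        : Set (Matrix (Fin 2) (Fin 2) A))
      = {m : Matrix (Fin 2) (Fin 2) A | m.trace = 0 ∧ ∀ i j, m i j ∈ a} := by
  obtain ⟨hcomp, htd, ht2, hquot⟩ := hA
  constructor
  · -- Part 1 : pro-`p`-ness
    intro I hI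
    obtain ⟨k, hk⟩ := hquot I hI
    by_cases hItop : I = ⊤
    · haveI : Subsingleton (A ⧸ I) := by
        refine subsingleton_of_zero_eq_one ?_
        have : (1 : A) ∈ I := by rw [hItop]; trivial
        rw [← Ideal.Quotient.eq_zero_iff_mem] at this
        rw [← map_one (Ideal.Quotient.mk I), this]
      intro g
      refine ⟨0, ?_⟩
      apply Subtype.ext
      apply Subtype.ext
      apply Matrix.ext
      intro i j
      exact Subsingleton.elim _ _
    · haveI := Ideal.Quotient.nontrivial_iff.mpr hItop
      haveI : Finite (A ⧸ I) := Nat.finite_of_card_ne_zero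
        (by rw [hk]; exact pow_ne_zero _ hp.pos.ne')
      obtain ⟨N, hN⟩ := IsArtinianRing.isNilpotent_jacobson_bot (R := A ⧸ I)
      set b : Ideal (A ⧸ I) := (⊥ : Ideal (A ⧸ I)).jacobson with hb
      have hpk : (p : A ⧸ I) ^ k = 0 := by
        have h := card_nsmul_eq_zero' (G := A ⧸ I) (x := (1 : A ⧸ I))
        rw [hk] at h
        calc (p : A ⧸ I) ^ k = ((p ^ k : ℕ) : A ⧸ I) := by push_cast; ring
          _ = (p ^ k) • (1 : A ⧸ I) := by rw [nsmul_eq_mul, mul_one]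
          _ = 0 := h
      have hpb : (p : A ⧸ I) ∈ b :=
        Ideal.radical_le_jacobson (mem_nilradical.mpr ⟨k, hpk⟩)
      have hab : Ideal.map (Ideal.Quotient.mk I) a ≤ b := by
        have h1 : a ≤ I.jacobson := by
          rw [IsLocalRing.jacobson_eq_maximalIdeal I hItop]; exact ham
        have h2 : Ideal.map (Ideal.Quotient.mk I) I.jacobson = b := by
          rw [Ideal.map_jacobson_of_surjective Ideal.Quotient.mk_surjective
            (le_of_eq Ideal.mk_ker), Ideal.map_quotient_self]
        exact h2 ▸ Ideal.map_mono h1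
      intro g
      obtain ⟨x, hx, hxg⟩ := Subgroup.mem_map.mp g.2
      refine ⟨N, ?_⟩
      have h1q : ((1 : Matrix.SpecialLinearGroup (Fin 2) (A ⧸ I)) :
          Matrix (Fin 2) (Fin 2) (A ⧸ I))
          = ((1 : Matrix (Fin 2) (Fin 2) A)).map (Ideal.Quotient.mk I) := by
        rw [Matrix.SpecialLinearGroup.coe_one, Matrix.map_one _ (map_zero _) (map_one _)]
      have hy : ∀ k' l', ((((g : Matrix.SpecialLinearGroup (Fin 2) (A ⧸ I))) :
          Matrix (Fin 2) (Fin 2) (A ⧸ I)) - 1) k' l' ∈ b := by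
        intro k' l'
        rw [mem_congr_iff] at hx
        rw [← hxg, Matrix.SpecialLinearGroup.map_apply_coe, RingHom.mapMatrix_apply,
          Matrix.sub_apply]
        rw [show (1 : Matrix (Fin 2) (Fin 2) (A ⧸ I))
            = ((1 : Matrix (Fin 2) (Fin 2) A)).map (Ideal.Quotient.mk I) from
          (Matrix.map_one _ (map_zero _) (map_one _)).symm]
        rw [Matrix.map_apply, Matrix.map_apply, ← map_sub]
        exact hab (Ideal.mem_map_of_mem _ (hx k' l'))
      have hbot : b ^ (N + 1) = ⊥ := by
        rw [pow_succ, hN, Ideal.zero_eq_bot]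
        exact Submodule.bot_mul b
      have hmat : (((g : Matrix.SpecialLinearGroup (Fin 2) (A ⧸ I))) :
          Matrix (Fin 2) (Fin 2) (A ⧸ I)) ^ p ^ N = 1 := by
        apply Matrix.ext
        intro k' l'
        have h := key_pow b hpb hy N k' l'
        rw [hbot, Ideal.mem_bot, Matrix.sub_apply] at h
        exact sub_eq_zero.mp h
      have hSL : (g : Matrix.SpecialLinearGroup (Fin 2) (A ⧸ I)) ^ p ^ N = 1 := by
        apply Subtype.ext
        rw [Matrix.SpecialLinearGroup.coe_pow, hmat, Matrix.SpecialLinearGroup.coe_one]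
      apply Subtype.ext
      rw [SubgroupClass.coe_pow, hSL, OneMemClass.coe_one]
  · -- Part 2 : the Pink-Lie algebra
    ext m
    simp only [Set.mem_setOf_eq]
    constructor
    · intro hm
      have hsub : AddSubgroup.closure
          ((fun x : Matrix.SpecialLinearGroup (Fin 2) A =>
              Theta (x : Matrix (Fin 2) (Fin 2) A)) ''
            (CongrSubgroup a : Set (Matrix.SpecialLinearGroup (Fin 2) A))) ≤ sl2 a := by
        rw [AddSubgroup.closure_le]
        rintro _ ⟨x, hx, rfl⟩
        exact theta_mem_sl2 a x hx
      have hclosedS : IsClosed ((sl2 a : AddSubgroup (Matrix (Fin 2) (Fin 2) A)) :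
          Set (Matrix (Fin 2) (Fin 2) A)) := by
        haveI := ht2
        have heq : ((sl2 a : AddSubgroup (Matrix (Fin 2) (Fin 2) A)) :
            Set (Matrix (Fin 2) (Fin 2) A)) =
            ((fun m : Matrix (Fin 2) (Fin 2) A => m.trace) ⁻¹' {0}) ∩
            ⋂ i, ⋂ j, ((fun m : Matrix (Fin 2) (Fin 2) A => m i j) ⁻¹' (a : Set A)) := by
          ext m'
          simp [sl2, AddSubgroup.mem_mk, Set.mem_iInter]
        rw [heq]
        exact ((isClosed_singleton.preimage (continuous_id.matrix_trace)).inter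
          (isClosed_iInter fun i => isClosed_iInter fun j =>
            hclosed.preimage (continuous_id.matrix_elem i j)))
      exact (AddSubgroup.topologicalClosure_minimal _ hsub hclosedS) hm
    · rintro ⟨htr, hent⟩
      apply AddSubgroup.le_topologicalClosure
      rw [Matrix.trace_fin_two] at htr
      have hm11 : m 1 1 = -(m 0 0) := eq_neg_of_add_eq_zero_right htr
      have hdet1 : (1 + m 0 0) * (1 + -(m 0 0)) - m 0 0 * -(m 0 0) = 1 := by ring
      have hdet2 : (1 + 0) * (1 + 0) - (m 0 1 - m 0 0) * 0 = (1 : A) := by ring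
      have hdet3 : (1 + 0) * (1 + 0) - 0 * (m 1 0 + m 0 0) = (1 : A) := by ring
      have h0 : (0 : A) ∈ a := zero_mem a
      have hmeq : m = Theta ((elt (m 0 0) (m 0 0) (-(m 0 0)) (-(m 0 0)) hdet1 :
            Matrix.SpecialLinearGroup (Fin 2) A) : Matrix (Fin 2) (Fin 2) A)
          + Theta ((elt 0 (m 0 1 - m 0 0) 0 0 hdet2 :
            Matrix.SpecialLinearGroup (Fin 2) A) : Matrix (Fin 2) (Fin 2) A)
          + Theta ((elt 0 0 (m 1 0 + m 0 0) 0 hdet3 :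
            Matrix.SpecialLinearGroup (Fin 2) A) : Matrix (Fin 2) (Fin 2) A) := by
        rw [theta_elt _ _ _ _ _ rfl, theta_elt _ _ _ _ _ (neg_zero).symm,
          theta_elt _ _ _ _ _ (neg_zero).symm]
        ext i j
        fin_cases i <;> fin_cases j <;> simp [hm11] <;> ring
      rw [hmeq]
      have hmem1 : elt (m 0 0) (m 0 0) (-(m 0 0)) (-(m 0 0)) hdet1 ∈ CongrSubgroup a :=
        elt_mem a _ _ _ _ _ (hent 0 0) (hent 0 0) (neg_mem (hent 0 0)) (neg_mem (hent 0 0))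
      have hmem2 : elt 0 (m 0 1 - m 0 0) 0 0 hdet2 ∈ CongrSubgroup a :=
        elt_mem a _ _ _ _ _ h0 (sub_mem (hent 0 1) (hent 0 0)) h0 h0
      have hmem3 : elt 0 0 (m 1 0 + m 0 0) 0 hdet3 ∈ CongrSubgroup a :=
        elt_mem a _ _ _ _ _ h0 h0 (add_mem (hent 1 0) (hent 0 0)) h0
      exact add_mem (add_mem (AddSubgroup.subset_closure ⟨_, hmem1, rfl⟩)
        (AddSubgroup.subset_closure ⟨_, hmem2, rfl⟩))
        (AddSubgroup.subset_closure ⟨_, hmem3, rfl⟩)
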